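/- arXiv:1311.2748 — 5 statements merged into one kernel-verified Lean document; each statement's English description precedes it below -/
import Mathlib

section
/- Let G be a graph of order n with a dominating induced matching M of size m, with spectral radius ρ, and suppose G is not the join of mK₂ with an empty graph (so that n² − 4(ρ²−ρ) > 0). Then ⌈(n − √(n² − 4(ρ²−ρ)))/4⌉ ≤ m ≤ ⌊(n + √(n² − 4(ρ²−ρ)))/4⌋. -/
open Matrix Finset
open scoped Classical

def edgesShare {V : Type*} (e f : Sym2 V) : Prop := ∃ v, v ∈ e ∧ v ∈ f

def matchedVert {V : Type*} (M : Finset (Sym2 V)) (v : V) : Prop := ∃ e ∈ M, v ∈ e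

/-- `M` is a set of edges of `G`, pairwise not sharing end-vertices. -/
def IsMatchingSet {V : Type*} (G : SimpleGraph V) (M : Finset (Sym2 V)) : Prop :=
  (∀ e ∈ M, e ∈ G.edgeSet) ∧ ∀ e ∈ M, ∀ f ∈ M, e ≠ f → ¬ edgesShare e f

/-- Dominating induced matching: every edge of `G` is in `M` or shares an
end-vertex with exactly one edge of `M`. -/
def IsDIM {V : Type*} (G : SimpleGraph V) (M : Finset (Sym2 V)) : Prop :=
  IsMatchingSet G M ∧ ∀ e ∈ G.edgeSet, e ∉ M → ∃! f, f ∈ M ∧ edgesShare e f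

/-- Induced matching: the subgraph induced by the matched vertices consists
exactly of the edges of `M`. -/
def IsInducedMatching {V : Type*} (G : SimpleGraph V) (M : Finset (Sym2 V)) : Prop :=
  IsMatchingSet G M ∧ ∀ e ∈ G.edgeSet, (∀ v ∈ e, matchedVert M v) → e ∈ M

/-- Complete dominating induced matching: a DIM such that the set of unmatched
vertices is nonempty and every matched vertex is adjacent to every unmatched vertex,
i.e. `E(G) = M ∪ {xy : x ∈ V(M), y ∉ V(M)}`. -/
def IsCompleteDIM {V : Type*} (G : SimpleGraph V) (M : Finset (Sym2 V)) : Prop :=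
  IsDIM G M ∧ (∃ v, ¬ matchedVert M v) ∧
    ∀ x y : V, matchedVert M x → ¬ matchedVert M y → G.Adj x y

variable {V : Type*} {G : SimpleGraph V} {M : Finset (Sym2 V)}

lemma aux_partner_unique (hM : IsMatchingSet G M) {u v₁ v₂ : V}
    (h1 : s(u,v₁) ∈ M) (h2 : s(u,v₂) ∈ M) : v₁ = v₂ := by
  by_contra hne
  have hne' : s(u,v₁) ≠ s(u,v₂) := fun h => hne (Sym2.congr_right.mp h)
  exact hM.2 _ h1 _ h2 hne' ⟨u, Sym2.mem_mk_left u v₁, Sym2.mem_mk_left u v₂⟩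

lemma aux_edge_classify (hM : IsDIM G M) {u v : V} (h : G.Adj u v) :
    s(u,v) ∈ M ∨ (matchedVert M u ∧ ¬ matchedVert M v) ∨
      (¬ matchedVert M u ∧ matchedVert M v) := by
  by_cases he : s(u,v) ∈ M
  · exact Or.inl he
  have huv : u ≠ v := h.ne
  obtain ⟨f, ⟨hfM, hfs⟩, huniq⟩ := hM.2 _ (G.mem_edgeSet.mpr h) he
  by_cases hu : matchedVert M u
  · by_cases hv : matchedVert M v
    · exfalso
      obtain ⟨e₁, he₁M, hue₁⟩ := hu
      obtain ⟨e₂, he₂M, hve₂⟩ := hv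
      have h1 : e₁ = f := huniq e₁ ⟨he₁M, ⟨u, Sym2.mem_mk_left u v, hue₁⟩⟩
      have h2 : e₂ = f := huniq e₂ ⟨he₂M, ⟨v, Sym2.mem_mk_right u v, hve₂⟩⟩
      have : f = s(u,v) := (Sym2.mem_and_mem_iff huv).mp ⟨h1 ▸ hue₁, h2 ▸ hve₂⟩
      exact he (this ▸ hfM)
    · exact Or.inr (Or.inl ⟨hu, hv⟩)
  · by_cases hv : matchedVert M v
    · exact Or.inr (Or.inr ⟨hu, hv⟩)
    · exfalso
      obtain ⟨w, hwe, hwf⟩ := hfs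
      rcases Sym2.mem_iff.mp hwe with rfl | rfl
      · exact hu ⟨f, hfM, hwf⟩
      · exact hv ⟨f, hfM, hwf⟩

lemma aux_card_T [Fintype V] (hM : IsMatchingSet G M) :
    (univ.filter (fun v => matchedVert M v)).card = 2 * M.card := by
  have hT : (univ.filter (fun v => matchedVert M v)) =
      M.biUnion (fun e => univ.filter (fun v => v ∈ e)) := by
    ext v
    simp only [Finset.mem_filter, Finset.mem_univ, true_and, Finset.mem_biUnion]; simp [matchedVert]
  rw [hT, Finset.card_biUnion]
  · rw [Finset.sum_congr rfl (fun e heM => ?_), Finset.sum_const, smul_eq_mul, mul_comm]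
    have := hM.1 e heM
    induction e with
    | _ a b =>
      have hab : a ≠ b := by
        intro hab; subst hab
        exact (SimpleGraph.irrefl G) (G.mem_edgeSet.mp this)
      have : (univ.filter (fun v => v ∈ s(a,b))) = {a, b} := by
        ext v; simp [Sym2.mem_iff]
      rw [this, Finset.card_insert_of_notMem (by simp [hab]), Finset.card_singleton]
  · intro e heM f hfM hef
    simp only [Finset.disjoint_left, Finset.mem_filter, Finset.mem_univ, true_and]
    intro v hve hvf
    exact hM.2 e heM f hfM hef ⟨v, hve, hvf⟩

lemma aux_algebra (c e A B : ℝ) (hc0 : 0 ≤ c) (hA : 0 ≤ A) (hB : 0 ≤ B)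
    (he0 : 0 ≤ e) (he2 : e^2 = 1/4 + c^2) :
    A^2 + 2*(c*(A*B)) ≤ (1/2+e)*(A^2+B^2) := by
  have hehalf : 1/2 ≤ e := by nlinarith [sq_nonneg c]
  nlinarith [sq_nonneg (c*(A^2-B^2) - A*B), mul_nonneg hA hB, sq_nonneg (A*B),
    mul_nonneg (mul_nonneg hc0 hA) hB, sq_nonneg (A^2+B^2), sq_nonneg (A^2-B^2),
    mul_nonneg he0 (add_nonneg (sq_nonneg A) (sq_nonneg B))]

set_option maxHeartbeats 2000000 in
lemma aux_rayleigh (n : ℕ) (G : SimpleGraph (Fin n)) [DecidableRel G.Adj]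
    (M : Finset (Sym2 (Fin n))) (hM : IsDIM G M) (z : Fin n → ℝ) (hz : ∀ v, 0 ≤ z v) :
    ∑ u, ∑ v, G.adjMatrix ℝ u v * (z u * z v) ≤
      (1/2 + Real.sqrt (1/4 + (2*M.card) * ((n:ℝ) - 2*M.card))) * ∑ v, z v ^ 2 := by
  set T : Finset (Fin n) := univ.filter (fun v => matchedVert M v) with hT_def
  have hTmem : ∀ u : Fin n, u ∈ T ↔ matchedVert M u := by
    intro u; simp [hT_def]
  have hcardT : T.card = 2 * M.card := aux_card_T hM.1
  have hcardTc : (Tᶜ : Finset (Fin n)).card = n - 2 * M.card := by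
    rw [Finset.card_compl, hcardT]; simp
  have h2mn : 2 * M.card ≤ n := by
    rw [← hcardT]; simpa using Finset.card_le_univ T
  -- abbreviations
  set a2 : ℝ := ∑ u ∈ T, z u ^ 2 with ha2
  set b2 : ℝ := ∑ u ∈ Tᶜ, z u ^ 2 with hb2
  have ha2nn : 0 ≤ a2 := Finset.sum_nonneg fun u _ => sq_nonneg _
  have hb2nn : 0 ≤ b2 := Finset.sum_nonneg fun u _ => sq_nonneg _
  have hsplit : ∑ v, z v ^ 2 = a2 + b2 := (Finset.sum_add_sum_compl T _).symm
  -- Step 1 : pointwise bound on adjacency entries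
  have step1 : ∑ u, ∑ v, G.adjMatrix ℝ u v * (z u * z v) ≤
      (∑ u, ∑ v, (if s(u,v) ∈ M then (1:ℝ) else 0) * (z u * z v)) +
      (∑ u, ∑ v, (if ((u ∈ T ∧ v ∉ T) ∨ (u ∉ T ∧ v ∈ T)) then (1:ℝ) else 0) * (z u * z v)) := by
    rw [← Finset.sum_add_distrib]
    apply Finset.sum_le_sum; intro u _
    rw [← Finset.sum_add_distrib]
    apply Finset.sum_le_sum; intro v _
    rw [← add_mul]
    have hznn : 0 ≤ z u * z v := mul_nonneg (hz u) (hz v)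
    apply mul_le_mul_of_nonneg_right _ hznn
    rw [SimpleGraph.adjMatrix_apply]
    by_cases hadj : G.Adj u v
    · rw [if_pos hadj]
      rcases aux_edge_classify hM hadj with h | h | h
      · rw [if_pos h]
        have : (0:ℝ) ≤ if ((u ∈ T ∧ v ∉ T) ∨ (u ∉ T ∧ v ∈ T)) then (1:ℝ) else 0 := by positivity
        linarith
      · rw [if_pos (Or.inl ⟨(hTmem u).mpr h.1, fun hc => h.2 ((hTmem v).mp hc)⟩)]
        have : (0:ℝ) ≤ if s(u,v) ∈ M then (1:ℝ) else 0 := by positivity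
        linarith
      · rw [if_pos (Or.inr ⟨fun hc => h.1 ((hTmem u).mp hc), (hTmem v).mpr h.2⟩)]
        have : (0:ℝ) ≤ if s(u,v) ∈ M then (1:ℝ) else 0 := by positivity
        linarith
    · rw [if_neg hadj]
      positivity
  -- Step 2 : matching part bounded by a2
  have step2 : (∑ u, ∑ v, (if s(u,v) ∈ M then (1:ℝ) else 0) * (z u * z v)) ≤ a2 := by
    have hsym : ∀ u v : Fin n, (if s(u,v) ∈ M then (1:ℝ) else 0) =
        (if s(v,u) ∈ M then (1:ℝ) else 0) := by
      intro u v; rw [Sym2.eq_swap]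
    have hhalf : (∑ u, ∑ v, (if s(u,v) ∈ M then (1:ℝ) else 0) * (z u * z v)) ≤
        ∑ u, ∑ v, (if s(u,v) ∈ M then (1:ℝ) else 0) * ((z u ^ 2 + z v ^ 2)/2) := by
      apply Finset.sum_le_sum; intro u _
      apply Finset.sum_le_sum; intro v _
      apply mul_le_mul_of_nonneg_left _ (by positivity)
      nlinarith [sq_nonneg (z u - z v)]
    have hswap : (∑ u, ∑ v, (if s(u,v) ∈ M then (1:ℝ) else 0) * (z v ^ 2)) =
        (∑ u, ∑ v, (if s(u,v) ∈ M then (1:ℝ) else 0) * (z u ^ 2)) := by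
      rw [Finset.sum_comm]
      exact Finset.sum_congr rfl fun u _ => Finset.sum_congr rfl fun v _ => by rw [hsym]
    have hcombine : (∑ u, ∑ v, (if s(u,v) ∈ M then (1:ℝ) else 0) * ((z u ^ 2 + z v ^ 2)/2)) =
        ∑ u, (∑ v, (if s(u,v) ∈ M then (1:ℝ) else 0)) * (z u ^ 2) := by
      have : ∀ u v : Fin n, (if s(u,v) ∈ M then (1:ℝ) else 0) * ((z u ^ 2 + z v ^ 2)/2) =
          ((if s(u,v) ∈ M then (1:ℝ) else 0) * (z u ^ 2))/2 +
          ((if s(u,v) ∈ M then (1:ℝ) else 0) * (z v ^ 2))/2 := by intro u v; ring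
      simp_rw [this, Finset.sum_add_distrib, ← Finset.sum_div]
      rw [hswap]
      have : ∀ u : Fin n, (∑ v, (if s(u,v) ∈ M then (1:ℝ) else 0)) * (z u ^ 2)
          = ∑ v, (if s(u,v) ∈ M then (1:ℝ) else 0) * (z u ^ 2) := fun u => Finset.sum_mul _ _ _
      simp_rw [this]
      rw [add_halves]
    have hcnt : ∀ u : Fin n, (∑ v, (if s(u,v) ∈ M then (1:ℝ) else 0)) ≤ 1 := by
      intro u
      rw [Finset.sum_boole]
      have : (univ.filter (fun v => s(u,v) ∈ M)).card ≤ 1 := by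
        apply Finset.card_le_one.mpr
        intro v₁ h1 v₂ h2
        exact aux_partner_unique hM.1 (Finset.mem_filter.mp h1).2 (Finset.mem_filter.mp h2).2
      exact_mod_cast this
    have hcnt0 : ∀ u : Fin n, u ∉ T → (∑ v, (if s(u,v) ∈ M then (1:ℝ) else 0)) = 0 := by
      intro u hu
      apply Finset.sum_eq_zero; intro v _
      rw [if_neg]
      intro hmem
      exact hu ((hTmem u).mpr ⟨s(u,v), hmem, Sym2.mem_mk_left u v⟩)
    calc (∑ u, ∑ v, (if s(u,v) ∈ M then (1:ℝ) else 0) * (z u * z v))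
        ≤ ∑ u, (∑ v, (if s(u,v) ∈ M then (1:ℝ) else 0)) * (z u ^ 2) := by
          rw [← hcombine]; exact hhalf
      _ = (∑ u ∈ T, (∑ v, (if s(u,v) ∈ M then (1:ℝ) else 0)) * (z u ^ 2)) +
          (∑ u ∈ Tᶜ, (∑ v, (if s(u,v) ∈ M then (1:ℝ) else 0)) * (z u ^ 2)) :=
          (Finset.sum_add_sum_compl T _).symm
      _ ≤ a2 + 0 := by
          apply add_le_add
          · apply Finset.sum_le_sum; intro u _
            have := hcnt u
            nlinarith [sq_nonneg (z u)]
          · apply le_of_eq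
            apply Finset.sum_eq_zero; intro u hu
            rw [hcnt0 u (Finset.mem_compl.mp hu), zero_mul]
      _ = a2 := add_zero _
  -- Step 3 : cross part equals product
  have step3 : (∑ u, ∑ v, (if ((u ∈ T ∧ v ∉ T) ∨ (u ∉ T ∧ v ∈ T)) then (1:ℝ) else 0) * (z u * z v))
      = 2 * (∑ u ∈ T, z u) * (∑ v ∈ Tᶜ, z v) := by
    have key : ∀ u v : Fin n,
        (if ((u ∈ T ∧ v ∉ T) ∨ (u ∉ T ∧ v ∈ T)) then (1:ℝ) else 0) * (z u * z v) =
        (if u ∈ T then (1:ℝ) else 0) * (if v ∈ Tᶜ then (1:ℝ) else 0) * (z u * z v) +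
        (if u ∈ Tᶜ then (1:ℝ) else 0) * (if v ∈ T then (1:ℝ) else 0) * (z u * z v) := by
      intro u v
      by_cases hu : u ∈ T <;> by_cases hv : v ∈ T <;>
        simp [hu, hv, Finset.mem_compl] <;> ring
    simp_rw [key, Finset.sum_add_distrib]
    have e0 : ∀ u v : Fin n,
        (if u ∈ T then (1:ℝ) else 0) * (if v ∈ Tᶜ then (1:ℝ) else 0) * (z u * z v) =
        (if u ∈ T then z u else 0) * (if v ∈ Tᶜ then z v else 0) := by
      intro u v
      by_cases hu : u ∈ T <;> by_cases hv : v ∈ Tᶜ <;> simp [hu, hv] <;> ring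
    have e0' : ∀ u v : Fin n,
        (if u ∈ Tᶜ then (1:ℝ) else 0) * (if v ∈ T then (1:ℝ) else 0) * (z u * z v) =
        (if u ∈ Tᶜ then z u else 0) * (if v ∈ T then z v else 0) := by
      intro u v
      by_cases hu : u ∈ Tᶜ <;> by_cases hv : v ∈ T <;> simp [hu, hv] <;> ring
    simp_rw [e0, e0']
    rw [← Fintype.sum_mul_sum, ← Fintype.sum_mul_sum]
    simp_rw [Fintype.sum_ite_mem]
    ring
  -- Step 4 : Cauchy–Schwarz
  have hP0 : (0:ℝ) ≤ ∑ u ∈ T, z u := Finset.sum_nonneg fun u _ => hz u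
  have hQ0 : (0:ℝ) ≤ ∑ u ∈ Tᶜ, z u := Finset.sum_nonneg fun u _ => hz u
  set kR : ℝ := 2 * M.card with hkR_def
  set sR : ℝ := (n:ℝ) - 2 * M.card with hsR_def
  have hk0 : 0 ≤ kR := by positivity
  have hs0 : 0 ≤ sR := by
    rw [hsR_def]
    have : (2 * M.card : ℝ) ≤ n := by exact_mod_cast h2mn
    push_cast at this ⊢
    linarith
  have hP : (∑ u ∈ T, z u) ^ 2 ≤ kR * a2 := by
    have h := sq_sum_le_card_mul_sum_sq (s := T) (f := z)
    rw [hcardT] at h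
    rw [hkR_def, ha2]
    exact_mod_cast h
  have hQ : (∑ u ∈ Tᶜ, z u) ^ 2 ≤ sR * b2 := by
    have h := sq_sum_le_card_mul_sum_sq (s := (Tᶜ : Finset (Fin n))) (f := z)
    rw [hcardTc] at h
    have hcast : ((n - 2*M.card : ℕ) : ℝ) = sR := by
      rw [hsR_def, Nat.cast_sub h2mn]; push_cast; ring
    rw [hb2, ← hcast]
    exact_mod_cast h
  set α : ℝ := Real.sqrt a2 with hα_def
  set β : ℝ := Real.sqrt b2 with hβ_def
  have hα0 : 0 ≤ α := Real.sqrt_nonneg _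
  have hβ0 : 0 ≤ β := Real.sqrt_nonneg _
  have hα2 : α ^ 2 = a2 := Real.sq_sqrt ha2nn
  have hβ2 : β ^ 2 = b2 := Real.sq_sqrt hb2nn
  set c : ℝ := Real.sqrt (kR * sR) with hc_def
  have hc0 : 0 ≤ c := Real.sqrt_nonneg _
  have hc2 : c ^ 2 = kR * sR := Real.sq_sqrt (mul_nonneg hk0 hs0)
  set e : ℝ := Real.sqrt (1/4 + kR * sR) with he_def
  have he0 : 0 ≤ e := Real.sqrt_nonneg _
  have he2 : e ^ 2 = 1/4 + kR * sR := Real.sq_sqrt (by positivity)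
  have hPα : (∑ u ∈ T, z u) ≤ Real.sqrt kR * α := by
    have h1 : (∑ u ∈ T, z u) = Real.sqrt ((∑ u ∈ T, z u)^2) := (Real.sqrt_sq hP0).symm
    rw [h1, hα_def, ← Real.sqrt_mul hk0]
    exact Real.sqrt_le_sqrt hP
  have hQβ : (∑ u ∈ Tᶜ, z u) ≤ Real.sqrt sR * β := by
    have h1 : (∑ u ∈ Tᶜ, z u) = Real.sqrt ((∑ u ∈ Tᶜ, z u)^2) := (Real.sqrt_sq hQ0).symm
    rw [h1, hβ_def, ← Real.sqrt_mul hs0]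
    exact Real.sqrt_le_sqrt hQ
  have hcross : (∑ u ∈ T, z u) * (∑ u ∈ Tᶜ, z u) ≤ c * (α * β) := by
    have := mul_le_mul hPα hQβ hQ0 (mul_nonneg (Real.sqrt_nonneg _) hα0)
    calc (∑ u ∈ T, z u) * (∑ u ∈ Tᶜ, z u) ≤ (Real.sqrt kR * α) * (Real.sqrt sR * β) := this
      _ = (Real.sqrt kR * Real.sqrt sR) * (α * β) := by ring
      _ = c * (α * β) := by rw [hc_def, ← Real.sqrt_mul hk0]
  -- Step 5 : final algebra
  have final : a2 + 2 * (c * (α * β)) ≤ (1/2 + e) * (a2 + b2) := by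
    rw [← hα2, ← hβ2]
    exact aux_algebra c e α β hc0 hα0 hβ0 he0 (by rw [he2, hc2])
  calc ∑ u, ∑ v, G.adjMatrix ℝ u v * (z u * z v)
      ≤ (∑ u, ∑ v, (if s(u,v) ∈ M then (1:ℝ) else 0) * (z u * z v)) +
        (∑ u, ∑ v, (if ((u ∈ T ∧ v ∉ T) ∨ (u ∉ T ∧ v ∈ T)) then (1:ℝ) else 0) * (z u * z v)) :=
        step1
    _ ≤ a2 + 2 * (∑ u ∈ T, z u) * (∑ v ∈ Tᶜ, z v) := by rw [step3]; exact add_le_add_left step2 _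
    _ ≤ a2 + 2 * (c * (α * β)) := by
        have := hcross
        nlinarith
    _ ≤ (1/2 + e) * (a2 + b2) := final
    _ = (1/2 + Real.sqrt (1/4 + (2*M.card) * ((n:ℝ) - 2*M.card))) * ∑ v, z v ^ 2 := by
        rw [hsplit, he_def, hkR_def, hsR_def]

/-- If `G` has order `n`, a DIM `M` of size `m`, adjacency spectral radius `ρ`, and `G`
is not the complete-DIM graph `K_{M,S}` (so `n² − 4(ρ²−ρ) > 0`), then
`⌈(n−√(n²−4(ρ²−ρ)))/4⌉ ≤ m ≤ ⌊(n+√(n²−4(ρ²−ρ)))/4⌋`. -/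
theorem stmt_11 (n m : ℕ) (G : SimpleGraph (Fin n)) [DecidableRel G.Adj]
    (M : Finset (Sym2 (Fin n))) (hM : IsDIM G M) (hcard : M.card = m)
    (hnot : ¬ IsCompleteDIM G M)
    (ρ : ℝ) (hρ₁ : ρ ∈ spectrum ℝ (G.adjMatrix ℝ))
    (hρ₂ : ∀ μ ∈ spectrum ℝ (G.adjMatrix ℝ), μ ≤ ρ) :
    ⌈((n : ℝ) - Real.sqrt ((n : ℝ)^2 - 4 * (ρ^2 - ρ))) / 4⌉ ≤ (m : ℤ) ∧
      (m : ℤ) ≤ ⌊((n : ℝ) + Real.sqrt ((n : ℝ)^2 - 4 * (ρ^2 - ρ))) / 4⌋ := by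
  clear hnot
  set A := G.adjMatrix ℝ with hA_def
  -- extract an eigenvector
  obtain ⟨y, hy0, hyA⟩ : ∃ y : Fin n → ℝ, y ≠ 0 ∧ A.mulVec y = ρ • y := by
    have h1 : ρ ∈ spectrum ℝ (Matrix.toLinAlgEquiv' A) := by
      rw [AlgEquiv.spectrum_eq Matrix.toLinAlgEquiv' A]; exact hρ₁
    have h2 := Module.End.hasEigenvalue_iff_mem_spectrum.mpr h1
    obtain ⟨v, hv⟩ := h2.exists_hasEigenvector
    refine ⟨v, hv.2, ?_⟩
    have := hv.apply_eq_smul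
    rwa [show (Matrix.toLinAlgEquiv' A : _) v = A.mulVec v from rfl] at this
  obtain ⟨u₀, hu₀⟩ := Function.ne_iff.mp hy0
  haveI : Nonempty (Fin n) := ⟨u₀⟩
  -- ρ is nonnegative
  have hρ0 : 0 ≤ ρ := by
    have hA : A.IsHermitian := by
      unfold Matrix.IsHermitian
      rw [conjTranspose_eq_transpose_of_trivial]
      exact G.isSymm_adjMatrix
    have htr : A.trace = ∑ i, hA.eigenvalues i := by
      simpa using hA.trace_eq_sum_eigenvalues
    have htr0 : A.trace = 0 := by simp [Matrix.trace, hA_def]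
    have hsum : ∑ i, hA.eigenvalues i ≤ ∑ _i : Fin n, ρ :=
      Finset.sum_le_sum fun i _ => hρ₂ _ (hA.eigenvalues_mem_spectrum_real i)
    rw [← htr, htr0] at hsum
    simp at hsum
    have hn : (0:ℝ) < n := by
      have := Fintype.card_pos (α := Fin n)
      simp at this
      exact_mod_cast this
    nlinarith
  -- 2m ≤ n
  have h2mn : 2 * m ≤ n := by
    rw [← hcard, ← aux_card_T hM.1]
    simpa using Finset.card_le_univ (univ.filter (fun v => matchedVert M v))
  have h2mnR : 2 * (m:ℝ) ≤ n := by exact_mod_cast h2mn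
  have hprod0 : (0:ℝ) ≤ 2*(m:ℝ)*((n:ℝ) - 2*m) :=
    mul_nonneg (by positivity) (by linarith)
  -- Rayleigh quotient with |y|
  set z : Fin n → ℝ := fun v => |y v| with hz_def
  have hz : ∀ v, 0 ≤ z v := fun v => abs_nonneg _
  have hzy : ∀ v, z v ^ 2 = y v ^ 2 := fun v => sq_abs _
  have hsum_pos : 0 < ∑ v, z v ^ 2 := by
    apply Finset.sum_pos' (fun v _ => sq_nonneg _)
    exact ⟨u₀, Finset.mem_univ _, by simpa [hz_def] using pow_pos (abs_pos.mpr hu₀) 2⟩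
  have hquad : ρ * ∑ v, z v ^ 2 ≤ ∑ u, ∑ v, A u v * (z u * z v) := by
    have e1 : ρ * ∑ v, z v ^ 2 = ∑ u, y u * (A.mulVec y u) := by
      rw [hyA]
      simp_rw [hzy, Pi.smul_apply, smul_eq_mul]
      rw [Finset.mul_sum]
      exact Finset.sum_congr rfl fun v _ => by ring
    have e2 : ∑ u, y u * (A.mulVec y u) = ∑ u, ∑ v, A u v * (y u * y v) := by
      apply Finset.sum_congr rfl; intro u _
      rw [Matrix.mulVec, dotProduct, Finset.mul_sum]
      exact Finset.sum_congr rfl fun v _ => by ring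
    rw [e1, e2]
    apply Finset.sum_le_sum; intro u _
    apply Finset.sum_le_sum; intro v _
    have hAnn : (0:ℝ) ≤ A u v := by
      rw [hA_def, SimpleGraph.adjMatrix_apply]; positivity
    apply mul_le_mul_of_nonneg_left _ hAnn
    calc y u * y v ≤ |y u * y v| := le_abs_self _
      _ = z u * z v := abs_mul _ _
  have hray := aux_rayleigh n G M hM z hz
  rw [hcard] at hray
  set E := Real.sqrt (1/4 + 2*(m:ℝ)*((n:ℝ) - 2*m)) with hE_def
  have hE0 : 0 ≤ E := Real.sqrt_nonneg _
  have hE2 : E^2 = 1/4 + 2*(m:ℝ)*((n:ℝ) - 2*m) := Real.sq_sqrt (by linarith)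
  have hρE : ρ ≤ 1/2 + E := by
    have hchain : ρ * ∑ v, z v ^ 2 ≤ (1/2 + E) * ∑ v, z v ^ 2 := by
      refine le_trans hquad (le_trans hray ?_)
      apply mul_le_mul_of_nonneg_right _ (le_of_lt hsum_pos)
      apply add_le_add_right
      apply Real.sqrt_le_sqrt
      push_cast
      linarith
    exact le_of_mul_le_mul_right (by linarith [hchain]) hsum_pos
  -- the key quadratic inequality
  have hEhalf : 1/2 ≤ E := by nlinarith
  have key : ρ^2 - ρ ≤ 2*(m:ℝ)*((n:ℝ) - 2*m) := by
    have h1 : ρ - 1/2 ≤ E := by linarith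
    have h2 : -E ≤ ρ - 1/2 := by linarith
    have h3 : (ρ - 1/2)^2 ≤ E^2 := sq_le_sq' h2 h1
    nlinarith
  -- conclude
  have hD : ((n:ℝ) - 4*m)^2 ≤ (n:ℝ)^2 - 4*(ρ^2 - ρ) := by nlinarith
  have hsq : |(n:ℝ) - 4*m| ≤ Real.sqrt ((n:ℝ)^2 - 4*(ρ^2 - ρ)) := by
    rw [← Real.sqrt_sq_eq_abs]
    exact Real.sqrt_le_sqrt hD
  have habs1 := le_abs_self ((n:ℝ) - 4*m)
  have habs2 := neg_abs_le ((n:ℝ) - 4*m)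
  constructor
  · apply Int.ceil_le.mpr
    push_cast
    linarith
  · apply Int.le_floor.mpr
    push_cast
    linarith
end

section
/- Let G be a graph of order n with minimum degree δ and adjacency spectral radius ρ. If G has a dominating induced matching M, then |M| ≥ n(2δ − ρ)/(2(2δ − 1)) (assuming δ ≥ 1). -/
open Matrix Finset
open scoped Classical

open scoped Pointwise

private 
lemma rayleigh (n : ℕ) (G : SimpleGraph (Fin n)) [DecidableRel G.Adj]
    (ρ : ℝ) (hρ₂ : ∀ μ ∈ spectrum ℝ (G.adjMatrix ℝ), μ ≤ ρ) :
    (∑ v, (G.degree v : ℝ)) ≤ n * ρ := by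
  set A := G.adjMatrix ℝ with hAdef
  have hA : A.IsHermitian := by
    rw [Matrix.IsHermitian, Matrix.conjTranspose_eq_transpose_of_trivial]
    exact G.isSymm_adjMatrix
  set B := ρ • (1 : Matrix (Fin n) (Fin n) ℝ) - A with hBdef
  have hB : B.IsHermitian := by
    rw [Matrix.IsHermitian, Matrix.conjTranspose_eq_transpose_of_trivial]
    simp [hBdef, hAdef, Matrix.transpose_sub, Matrix.transpose_smul, G.isSymm_adjMatrix.eq]
  have hspec : spectrum ℝ B = ({ρ} : Set ℝ) - spectrum ℝ A := by
    rw [hBdef]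
    have : ρ • (1 : Matrix (Fin n) (Fin n) ℝ) = algebraMap ℝ _ ρ := by
      simp [Algebra.algebraMap_eq_smul_one]
    rw [this, spectrum.singleton_sub_eq]
  have hpsd : B.PosSemidef := by
    apply hB.posSemidef_iff_eigenvalues_nonneg.mpr
    intro i
    show 0 ≤ hB.eigenvalues i
    have hmem : hB.eigenvalues i ∈ spectrum ℝ B := hB.eigenvalues_mem_spectrum_real i
    rw [hspec] at hmem
    obtain ⟨x, hx, y, hy, hxy⟩ := hmem
    simp only [Set.mem_singleton_iff] at hx
    subst hx
    have h2 := hρ₂ y hy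
    simp only at hxy
    linarith
  have key := hpsd.dotProduct_mulVec_nonneg (fun _ => (1 : ℝ))
  have h1 : (star (fun _ => (1:ℝ)) : Fin n → ℝ) = fun _ => 1 := rfl
  rw [h1] at key
  have hmv : B *ᵥ (fun _ => (1:ℝ)) = fun v => ρ - G.degree v := by
    funext v
    have hd : (A *ᵥ fun _ => (1:ℝ)) v = G.degree v := by
      rw [show (fun _ => (1:ℝ)) = Function.const (Fin n) (1:ℝ) from rfl,
        SimpleGraph.adjMatrix_mulVec_const_apply, mul_one]
    simp [hBdef, Matrix.sub_mulVec, Matrix.smul_mulVec, Matrix.one_mulVec, hd]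
  rw [hmv] at key
  simp only [dotProduct, one_mul] at key
  have : ∑ v : Fin n, (ρ - (G.degree v : ℝ)) = n * ρ - ∑ v, (G.degree v : ℝ) := by
    rw [Finset.sum_sub_distrib]
    simp [mul_comm]
  rw [this] at key
  linarith

private lemma comb (n : ℕ) (G : SimpleGraph (Fin n)) [DecidableRel G.Adj]
    (M : Finset (Sym2 (Fin n))) (hM : IsDIM G M) :
    2 * M.card ≤ n ∧
      2 * M.card + 2 * ((n - 2 * M.card) * G.minDegree) ≤ ∑ v, G.degree v := by
  obtain ⟨⟨hMe, hMd⟩, hdom⟩ := hM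
  set T := univ.filter (fun v : Fin n => matchedVert M v) with hTdef
  set S := univ.filter (fun v : Fin n => ¬ matchedVert M v) with hSdef
  -- neighbors of unmatched vertices are matched
  have hSnbr : ∀ v, ¬ matchedVert M v → ∀ w, G.Adj v w → matchedVert M w := by
    intro v hv w hadj
    have he : s(v, w) ∈ G.edgeSet := hadj
    have hnM : s(v, w) ∉ M := fun h => hv ⟨_, h, Sym2.mem_mk_left v w⟩
    obtain ⟨f, ⟨hfM, x, hxe, hxf⟩, _⟩ := hdom _ he hnM
    rcases Sym2.mem_iff.mp hxe with rfl | rfl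
    · exact absurd ⟨f, hfM, hxf⟩ hv
    · exact ⟨f, hfM, hxf⟩
  -- degree of matched vertices
  have hTdeg : ∀ v, matchedVert M v →
      G.degree v = 1 + ((G.neighborFinset v).filter (fun w => ¬ matchedVert M w)).card := by
    intro v hv
    obtain ⟨e, heM, hve⟩ := hv
    obtain ⟨u, rfl⟩ := Sym2.mem_iff_exists.mp hve
    have hadj : G.Adj v u := hMe _ heM
    have hnbr : G.neighborFinset v
        = insert u ((G.neighborFinset v).filter (fun w => ¬ matchedVert M w)) := by
      ext w
      simp only [Finset.mem_insert, Finset.mem_filter, SimpleGraph.mem_neighborFinset]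
      constructor
      · intro hw
        by_cases hwu : w = u
        · exact Or.inl hwu
        · refine Or.inr ⟨hw, ?_⟩
          rintro ⟨f, hfM, hwf⟩
          have hvw : s(v, w) ∈ G.edgeSet := hw
          by_cases hvwM : s(v, w) ∈ M
          · have : s(v, w) = s(v, u) := by
              by_contra hne
              exact hMd _ hvwM _ heM hne ⟨v, Sym2.mem_mk_left v w, Sym2.mem_mk_left v u⟩
            rcases Sym2.mem_iff.mp (this ▸ Sym2.mem_mk_right v w) with h | h
            · exact G.ne_of_adj hw h.symm
            · exact hwu h
          · obtain ⟨g, _, hguniq⟩ := hdom _ hvw hvwM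
            have hef : s(v, u) ≠ f := by
              rintro rfl
              rcases Sym2.mem_iff.mp hwf with h | h
              · exact G.ne_of_adj hw h.symm
              · exact hwu h
            have h1 : s(v, u) = g := hguniq _ ⟨heM, v, Sym2.mem_mk_left v w, Sym2.mem_mk_left v u⟩
            have h2 : f = g := hguniq _ ⟨hfM, w, Sym2.mem_mk_right v w, hwf⟩
            exact hef (h1.trans h2.symm)
      · rintro (rfl | ⟨hw, _⟩)
        · exact hadj
        · exact hw
    have hu : u ∉ (G.neighborFinset v).filter (fun w => ¬ matchedVert M w) := by
      simp only [Finset.mem_filter, not_and, not_not]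
      exact fun _ => ⟨_, heM, Sym2.mem_mk_right v u⟩
    rw [SimpleGraph.degree]
    conv_lhs => rw [hnbr]
    rw [Finset.card_insert_of_notMem hu]
    omega
  -- double counting
  have hswap : ∑ v ∈ T, ((G.neighborFinset v).filter (fun w => ¬ matchedVert M w)).card
      = ∑ v ∈ S, G.degree v := by
    have lhs : ∀ v, ((G.neighborFinset v).filter (fun w => ¬ matchedVert M w))
        = S.filter (fun w => G.Adj v w) := by
      intro v; ext w
      simp only [Finset.mem_filter, SimpleGraph.mem_neighborFinset, hSdef, Finset.mem_univ,
        true_and]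
      tauto
    have rhs : ∀ v ∈ S, G.neighborFinset v = T.filter (fun w => G.Adj v w) := by
      intro v hv; ext w
      simp only [Finset.mem_filter, SimpleGraph.mem_neighborFinset, hTdef, Finset.mem_univ,
        true_and] at *
      have hv' : ¬ matchedVert M v := (Finset.mem_filter.mp hv).2
      exact ⟨fun h => ⟨hSnbr v hv' w h, h⟩, fun h => h.2⟩
    calc ∑ v ∈ T, ((G.neighborFinset v).filter (fun w => ¬ matchedVert M w)).card
        = ∑ v ∈ T, ∑ w ∈ S, (if G.Adj v w then 1 else 0) := by
          refine Finset.sum_congr rfl fun v _ => ?_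
          rw [lhs v, Finset.card_filter]
      _ = ∑ v ∈ T, ∑ w ∈ S, (if G.Adj w v then 1 else 0) := by
          refine Finset.sum_congr rfl fun v _ => Finset.sum_congr rfl fun w _ => ?_
          exact if_congr (G.adj_comm v w) rfl rfl
      _ = ∑ w ∈ S, ∑ v ∈ T, (if G.Adj w v then 1 else 0) := Finset.sum_comm
      _ = ∑ w ∈ S, G.degree w := by
          refine Finset.sum_congr rfl fun w hw => ?_
          rw [SimpleGraph.degree, rhs w hw, Finset.card_filter]
  -- card of T
  have hTcard : T.card = 2 * M.card := by
    have hT : T = M.biUnion (fun e => univ.filter (fun v => v ∈ e)) := by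
      ext v
      simp only [hTdef, Finset.mem_filter, Finset.mem_univ, true_and, Finset.mem_biUnion,
        matchedVert]
      exact (@Finset.mem_filter _ _ (fun _ => Classical.propDecidable _) _ _).trans ⟨fun h => h.2, fun h => ⟨Finset.mem_univ _, h⟩⟩
    rw [hT, Finset.card_biUnion]
    · rw [Finset.sum_congr rfl (fun e he => ?_), Finset.sum_const, smul_eq_mul, mul_comm]
      · show (univ.filter (fun v => v ∈ e)).card = 2
        have hnd : ¬ e.IsDiag := G.not_isDiag_of_mem_edgeSet (hMe _ he)
        induction e using Sym2.ind with
        | _ a b =>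
          have hab : a ≠ b := by simpa using hnd
          have : univ.filter (fun v : Fin n => v ∈ s(a, b)) = {a, b} := by
            ext v; simp [Sym2.mem_iff]
          rw [this, Finset.card_insert_of_notMem (by simpa using hab), Finset.card_singleton]
    · intro e he f hf hef
      rw [Function.onFun, Finset.disjoint_filter]
      intro v _ hve hvf
      exact hMd e he f hf hef ⟨v, hve, hvf⟩
  have hpart : T.card + S.card = n := by
    rw [hTdef, hSdef]
    rw [Finset.card_filter_add_card_filter_not]
    simp
  have hsplit : ∑ v, G.degree v = (∑ v ∈ T, G.degree v) + ∑ v ∈ S, G.degree v := by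
    rw [hTdef, hSdef, Finset.sum_filter_add_sum_filter_not]
  have hTsum : ∑ v ∈ T, G.degree v = 2 * M.card + ∑ v ∈ S, G.degree v := by
    rw [Finset.sum_congr rfl (fun v hv => hTdeg v (by simpa [hTdef] using hv)),
      Finset.sum_add_distrib, Finset.sum_const, smul_eq_mul, mul_one, hTcard, hswap]
  have hSsum : S.card * G.minDegree ≤ ∑ v ∈ S, G.degree v := by
    calc S.card * G.minDegree = ∑ _v ∈ S, G.minDegree := by rw [Finset.sum_const, smul_eq_mul]
      _ ≤ ∑ v ∈ S, G.degree v :=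
        Finset.sum_le_sum fun v _ => G.minDegree_le_degree v
  have h2M : 2 * M.card ≤ n := by omega
  refine ⟨h2M, ?_⟩
  have hScard : S.card = n - 2 * M.card := by omega
  calc 2 * M.card + 2 * ((n - 2 * M.card) * G.minDegree)
      ≤ 2 * M.card + 2 * ∑ v ∈ S, G.degree v := by
        have := hSsum
        rw [hScard] at this
        omega
    _ = ∑ v, G.degree v := by omega

/-- If `G` has order `n`, minimum degree `δ ≥ 1`, adjacency spectral radius `ρ`, and a
dominating induced matching `M`, then `|M| ≥ n(2δ−ρ)/(2(2δ−1))`. -/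
theorem stmt_12 (n : ℕ) (hn : 0 < n) (G : SimpleGraph (Fin n)) [DecidableRel G.Adj]
    (hδ : 1 ≤ G.minDegree)
    (ρ : ℝ) (hρ₁ : ρ ∈ spectrum ℝ (G.adjMatrix ℝ))
    (hρ₂ : ∀ μ ∈ spectrum ℝ (G.adjMatrix ℝ), μ ≤ ρ)
    (M : Finset (Sym2 (Fin n))) (hM : IsDIM G M) :
    (n : ℝ) * (2 * (G.minDegree : ℝ) - ρ) / (2 * (2 * (G.minDegree : ℝ) - 1))
      ≤ (M.card : ℝ) := by
  have hray := rayleigh n G ρ hρ₂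
  obtain ⟨h2M, hcomb⟩ := comb n G M hM
  have hδ1 : (1 : ℝ) ≤ (G.minDegree : ℝ) := by exact_mod_cast hδ
  have hcombR : 2 * (M.card : ℝ) + 2 * (((n : ℝ) - 2 * M.card) * G.minDegree)
      ≤ ∑ v, (G.degree v : ℝ) := by
    have := hcomb
    have hcast : ((n - 2 * M.card : ℕ) : ℝ) = (n : ℝ) - 2 * M.card := by
      push_cast [Nat.cast_sub h2M]; ring
    calc 2 * (M.card : ℝ) + 2 * (((n : ℝ) - 2 * M.card) * G.minDegree)
        = ((2 * M.card + 2 * ((n - 2 * M.card) * G.minDegree) : ℕ) : ℝ) := by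
          push_cast [Nat.cast_sub h2M]; ring
      _ ≤ ((∑ v, G.degree v : ℕ) : ℝ) := by exact_mod_cast this
      _ = ∑ v, (G.degree v : ℝ) := by push_cast; rfl
  have hmain : 2 * (M.card : ℝ) + 2 * (((n : ℝ) - 2 * M.card) * G.minDegree) ≤ n * ρ :=
    hcombR.trans hray
  have hden : (0 : ℝ) < 2 * (2 * (G.minDegree : ℝ) - 1) := by linarith
  rw [div_le_iff₀ hden]
  nlinarith [hmain]
end

section
/- Let G be a graph with adjacency spectrum σ, let Λ⁻ = {λ ∈ σ : λ ≤ −1} and Λ⁺ = {λ ∈ σ : λ ≥ 1} (counted with multiplicity). If M is an induced matching of G, then |M| ≤ min{|Λ⁻|, |Λ⁺|}. -/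
open Matrix Finset
open scoped Classical

open Polynomial in
lemma charpoly_conj_aux {m R : Type*} [Fintype m] [DecidableEq m] [CommRing R]
    (U A V : Matrix m m R) (h1 : U * V = 1) :
    (U * A * V).charpoly = A.charpoly := by
  have hc : Commute (Matrix.scalar m (X : R[X])) ((C : R →+* R[X]).mapMatrix U) :=
    Matrix.scalar_commute _ (fun r' => Commute.all _ _) _
  have hUV : (C : R →+* R[X]).mapMatrix U * (C : R →+* R[X]).mapMatrix V = 1 := by
    rw [← RingHom.map_mul, h1, RingHom.map_one]
  have hm : charmatrix (U * A * V) = (C : R →+* R[X]).mapMatrix U * charmatrix A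
      * (C : R →+* R[X]).mapMatrix V := by
    rw [charmatrix, charmatrix, mul_sub, sub_mul]
    congr 1
    · rw [← hc.eq, mul_assoc, hUV, mul_one]
    · rw [RingHom.map_mul, RingHom.map_mul]
  unfold Matrix.charpoly
  rw [hm, det_mul, det_mul, mul_comm ((C : R →+* R[X]).mapMatrix U).det, mul_assoc,
    ← det_mul, hUV]
  simp

open Polynomial in
lemma roots_charpoly {n : ℕ} (A : Matrix (Fin n) (Fin n) ℝ) (hA : A.IsHermitian) :
    A.charpoly.roots = Multiset.map hA.eigenvalues univ.val := by
  have hsp := hA.spectral_theorem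
  have h1 : (hA.eigenvectorUnitary : Matrix (Fin n) (Fin n) ℝ)
      * (star hA.eigenvectorUnitary : Matrix (Fin n) (Fin n) ℝ) = 1 := by
    exact_mod_cast hA.eigenvectorUnitary.2.2
  have hcp : A.charpoly = (Matrix.diagonal (RCLike.ofReal ∘ hA.eigenvalues)
      : Matrix (Fin n) (Fin n) ℝ).charpoly := by
    conv_lhs => rw [hsp]
    exact charpoly_conj_aux _ _ _ h1
  have hD : (RCLike.ofReal ∘ hA.eigenvalues : Fin n → ℝ) = hA.eigenvalues := by
    funext i; simp [RCLike.ofReal]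
  rw [hcp, hD, charpoly_of_upperTriangular _ (Matrix.blockTriangular_diagonal _)]
  have : ∀ i : Fin n, Matrix.diagonal hA.eigenvalues i i = hA.eigenvalues i := by
    simp
  simp_rw [this]
  rw [Finset.prod_eq_multiset_prod]
  have := roots_multiset_prod_X_sub_C (Multiset.map hA.eigenvalues univ.val)
  rwa [Multiset.map_map] at this


open Polynomial in
lemma key_count {n k : ℕ} (A : Matrix (Fin n) (Fin n) ℝ) (hA : A.IsHermitian)
    (s : ℝ) (hs : s * s = 1) (w : Fin k → (Fin n → ℝ))
    (hww : ∀ i j, w i ⬝ᵥ w j = if i = j then 2 else 0)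
    (hAw : ∀ i j, w i ⬝ᵥ (A *ᵥ w j) = if i = j then 2 * s else 0) :
    k ≤ (univ.filter fun i => 1 ≤ s * hA.eigenvalues i).card := by
  classical
  set μ := hA.eigenvalues with hμ
  set P := univ.filter fun i => 1 ≤ s * μ i with hP
  by_contra hlt
  push_neg at hlt
  set U := (hA.eigenvectorUnitary : Matrix (Fin n) (Fin n) ℝ) with hUdef
  have hU1 : U * star U = 1 := by exact_mod_cast hA.eigenvectorUnitary.2.2
  have hU2 : star U * U = 1 := by exact_mod_cast hA.eigenvectorUnitary.2.1
  have hsU : star U = Uᵀ := by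
    rw [Matrix.star_eq_conjTranspose, conjTranspose_eq_transpose_of_trivial]
  have hD : (RCLike.ofReal ∘ μ : Fin n → ℝ) = μ := by funext i; simp [RCLike.ofReal]
  have hAU : A = U * Matrix.diagonal μ * Uᵀ := by
    conv_lhs => rw [hA.spectral_theorem]; rw [hD]
    rw [Unitary.conjStarAlgAut_apply, ← hUdef, hsU]
  rw [hsU] at hU1 hU2
  let L : (Fin k → ℝ) →ₗ[ℝ] ({i // i ∈ P} → ℝ) :=
    { toFun := fun c i => (Uᵀ *ᵥ (∑ j, c j • w j)) i.1
      map_add' := by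
        intro a b; funext i
        simp [add_smul, Finset.sum_add_distrib, Matrix.mulVec_add]
      map_smul' := by
        intro r a; funext i
        have h : ∑ j, (r • a) j • w j = r • ∑ j, a j • w j := by
          rw [Finset.smul_sum]
          exact Finset.sum_congr rfl fun j _ => by simp [smul_smul]
        simp only [h, Matrix.mulVec_smul]
        simp }
  have hnotinj : ¬ Function.Injective L := by
    intro hinj
    have := LinearMap.finrank_le_finrank_of_injective hinj
    simp only [Module.finrank_pi, Fintype.card_fin, Fintype.card_coe] at this
    omega
  have : ∃ c : Fin k → ℝ, c ≠ 0 ∧ L c = 0 := by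
    rw [← LinearMap.ker_eq_bot] at hnotinj
    obtain ⟨c, hc, hc0⟩ := Submodule.exists_mem_ne_zero_of_ne_bot hnotinj
    exact ⟨c, hc0, hc⟩
  obtain ⟨c, hc0, hLc⟩ := this
  set x : Fin n → ℝ := ∑ j, c j • w j with hx
  set d : Fin n → ℝ := Uᵀ *ᵥ x with hd
  have hdP : ∀ i ∈ P, d i = 0 := fun i hi => congrFun hLc ⟨i, hi⟩
  have hdots : ∀ (y : Fin n → ℝ) (v : Fin k → Fin n → ℝ),
      y ⬝ᵥ (∑ i, c i • v i) = ∑ i, c i * (y ⬝ᵥ v i) := by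
    intro y v
    simp only [dotProduct, Finset.sum_apply, Pi.smul_apply, smul_eq_mul, Finset.mul_sum]
    rw [Finset.sum_comm]
    refine Finset.sum_congr rfl fun i _ => Finset.sum_congr rfl fun z _ => by ring
  have hdot : ∀ y : Fin n → ℝ, y ⬝ᵥ x = ∑ i, c i * (y ⬝ᵥ w i) := fun y => hdots y w
  have hwx : ∀ j, w j ⬝ᵥ x = 2 * c j := by
    intro j
    rw [hdot]
    have : ∀ i, (w j) ⬝ᵥ w i = if i = j then 2 else 0 := by
      intro i; rw [hww]
      by_cases h : i = j
      · simp [h]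
      · rw [if_neg (fun hji => h hji.symm), if_neg h]
    simp only [this, mul_ite, mul_zero]
    rw [Finset.sum_ite_eq' univ j (fun i => c i * 2)]
    simp [mul_comm]
  have hxne : x ≠ 0 := by
    intro h
    apply hc0
    funext j
    have := hwx j
    rw [h, dotProduct_zero] at this
    simpa using this.symm
  have hxd : x = U *ᵥ d := by
    rw [hd, mulVec_mulVec, hU1, one_mulVec]
  have hdne : d ≠ 0 := by
    intro h; apply hxne; rw [hxd, h, mulVec_zero]
  have hUy : ∀ y : Fin n → ℝ, x ⬝ᵥ (U *ᵥ y) = d ⬝ᵥ y := by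
    intro y
    rw [dotProduct_mulVec, ← mulVec_transpose, ← hd]
  have hxx : x ⬝ᵥ x = ∑ i, d i ^ 2 := by
    nth_rewrite 2 [hxd]
    rw [hUy]
    simp [dotProduct, sq]
  have hDd : Matrix.diagonal μ *ᵥ d = fun i => μ i * d i := by
    funext i; rw [mulVec_diagonal]
  have hxAx : x ⬝ᵥ (A *ᵥ x) = ∑ i, μ i * d i ^ 2 := by
    conv_lhs => rw [hAU]
    rw [← mulVec_mulVec, ← mulVec_mulVec, ← hd, hUy, hDd]
    simp only [dotProduct]
    exact Finset.sum_congr rfl fun i _ => by ring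
  have hxxval : x ⬝ᵥ x = 2 * ∑ j, c j ^ 2 := by
    rw [hdot]
    have hc : ∀ i, x ⬝ᵥ w i = 2 * c i := fun i => by rw [dotProduct_comm]; exact hwx i
    simp only [hc]
    rw [Finset.mul_sum]
    exact Finset.sum_congr rfl fun i _ => by ring
  have hAwx : ∀ i, x ⬝ᵥ (A *ᵥ w i) = 2 * s * c i := by
    intro i
    rw [dotProduct_comm, hdot]
    have : ∀ j, (A *ᵥ w i) ⬝ᵥ w j = if j = i then 2 * s else 0 := by
      intro j
      rw [dotProduct_comm, hAw]
    simp only [this, mul_ite, mul_zero]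
    rw [Finset.sum_ite_eq' univ i (fun j => c j * (2 * s))]
    simp [mul_comm, mul_assoc, mul_left_comm]
  have hAxsum : A *ᵥ x = ∑ i, c i • (A *ᵥ w i) := by
    rw [hx, ← A.mulVecLin_apply, map_sum]
    exact Finset.sum_congr rfl fun i _ => by simp
  have hxAxval : x ⬝ᵥ (A *ᵥ x) = s * (2 * ∑ j, c j ^ 2) := by
    rw [hAxsum, hdots x (fun i => A *ᵥ w i)]
    simp only [hAwx]
    rw [Finset.mul_sum, Finset.mul_sum]
    exact Finset.sum_congr rfl fun i _ => by ring
  have hsum : ∑ i, (s * μ i) * d i ^ 2 = ∑ i, d i ^ 2 := by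
    have h1 : ∑ i, (s * μ i) * d i ^ 2 = s * (x ⬝ᵥ (A *ᵥ x)) := by
      rw [hxAx, Finset.mul_sum]
      exact Finset.sum_congr rfl fun i _ => by ring
    rw [h1, hxAxval, ← mul_assoc, hs, one_mul, ← hxx, hxxval]
  have hlesum : ∀ i ∈ univ, (s * μ i) * d i ^ 2 ≤ d i ^ 2 := by
    intro i _
    by_cases hi : i ∈ P
    · rw [hdP i hi]; simp
    · rw [hP, Finset.mem_filter] at hi
      push_neg at hi
      have : s * μ i < 1 := hi (Finset.mem_univ i)
      nlinarith [sq_nonneg (d i)]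
  obtain ⟨j, hj⟩ := Function.ne_iff.mp hdne
  have hj' : d j ≠ 0 := by simpa using hj
  have hjP : j ∉ P := fun h => hj' (hdP j h)
  have hstrict : (s * μ j) * d j ^ 2 < d j ^ 2 := by
    rw [hP, Finset.mem_filter] at hjP
    push_neg at hjP
    have h1 : s * μ j < 1 := hjP (Finset.mem_univ j)
    have h2 : 0 < d j ^ 2 := pow_two_pos_of_ne_zero hj'
    nlinarith
  have := Finset.sum_lt_sum hlesum ⟨j, Finset.mem_univ j, hstrict⟩
  rw [hsum] at this
  exact lt_irrefl _ this


/-- If `M` is an induced matching of `G`, then `|M| ≤ min{|Λ⁻|, |Λ⁺|}`, where `Λ⁻`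
(resp. `Λ⁺`) is the multiset of adjacency eigenvalues `≤ −1` (resp. `≥ 1`). -/
theorem stmt_15 (n : ℕ) (G : SimpleGraph (Fin n)) [DecidableRel G.Adj]
    (M : Finset (Sym2 (Fin n))) (hM : IsInducedMatching G M) :
    M.card ≤
      min (Multiset.card (((G.adjMatrix ℝ).charpoly.roots).filter (fun x => x ≤ -1)))
          (Multiset.card (((G.adjMatrix ℝ).charpoly.roots).filter (fun x => 1 ≤ x))) := by
    classical
  set A := G.adjMatrix ℝ with hAdef
  have hA : A.IsHermitian := by
    rw [Matrix.IsHermitian, conjTranspose_eq_transpose_of_trivial]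
    exact G.isSymm_adjMatrix
  set μ := hA.eigenvalues with hμ
  -- choose ordered endpoints for every edge
  have hrep : ∀ a : Sym2 (Fin n), ∃ pq : Fin n × Fin n, a = s(pq.1, pq.2) :=
    fun a => Sym2.ind (fun x y => ⟨(x, y), rfl⟩) a
  choose pq hpq using hrep
  set k := M.card with hk
  let edge : Fin k → Sym2 (Fin n) := fun i => (M.equivFin.symm i).1
  have hedgeM : ∀ i, edge i ∈ M := fun i => (M.equivFin.symm i).2
  have hedge_inj : Function.Injective edge := by
    intro i j h
    have := Subtype.ext (p := fun x => x ∈ M) h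
    exact M.equivFin.symm.injective this
  let u : Fin k → Fin n := fun i => (pq (edge i)).1
  let v : Fin k → Fin n := fun i => (pq (edge i)).2
  have huv : ∀ i, edge i = s(u i, v i) := fun i => hpq (edge i)
  have hadj : ∀ i, G.Adj (u i) (v i) := by
    intro i
    have h := hM.1.1 _ (hedgeM i)
    rw [huv i] at h
    exact h
  have hne : ∀ i, u i ≠ v i := fun i => (hadj i).ne
  have humem : ∀ i, u i ∈ edge i := fun i => by rw [huv i]; simp
  have hvmem : ∀ i, v i ∈ edge i := fun i => by rw [huv i]; simp
  -- cross facts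
  have hdisj : ∀ i j, i ≠ j → ∀ z z', z ∈ edge i → z' ∈ edge j → z ≠ z' := by
    intro i j hij z z' hz hz' hzz
    exact hM.1.2 _ (hedgeM i) _ (hedgeM j) (fun h => hij (hedge_inj h))
      ⟨z, hz, hzz ▸ hz'⟩
  have hcross : ∀ i j, i ≠ j → ∀ z z', z ∈ edge i → z' ∈ edge j → ¬ G.Adj z z' := by
    intro i j hij z z' hz hz' hadj'
    have hzz' : s(z, z') ∈ M := by
      apply hM.2 _ hadj'
      intro t ht
      rcases Sym2.mem_iff.mp ht with rfl | rfl
      · exact ⟨edge i, hedgeM i, hz⟩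
      · exact ⟨edge j, hedgeM j, hz'⟩
    have h1 : s(z, z') = edge i := by
      by_contra h
      exact hM.1.2 _ hzz' _ (hedgeM i) h ⟨z, by simp, hz⟩
    have h2 : s(z, z') = edge j := by
      by_contra h
      exact hM.1.2 _ hzz' _ (hedgeM j) h ⟨z', by simp, hz'⟩
    exact hij (hedge_inj (h1 ▸ h2))
  -- adjacency entries
  have hA0 : ∀ z z', ¬ G.Adj z z' → A z z' = 0 := by
    intro z z' h; simp [hAdef, SimpleGraph.adjMatrix_apply, h]
  have hA1 : ∀ z z', G.Adj z z' → A z z' = 1 := by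
    intro z z' h; simp [hAdef, SimpleGraph.adjMatrix_apply, h]
  -- the test vectors
  have main : ∀ s : ℝ, s * s = 1 →
      k ≤ (univ.filter fun i => 1 ≤ s * μ i).card := by
    intro s hs
    let w : Fin k → Fin n → ℝ :=
      fun i z => (if z = u i then (1:ℝ) else 0) + s * (if z = v i then 1 else 0)
    have hwval : ∀ i z, w i z =
        (if z = u i then (1:ℝ) else 0) + s * (if z = v i then 1 else 0) :=
      fun i z => rfl
    have hwdot : ∀ i (y : Fin n → ℝ), w i ⬝ᵥ y = y (u i) + s * y (v i) := by
      intro i y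
      have hterm : ∀ z, w i z * y z =
          (if z = u i then y z else 0) + s * (if z = v i then y z else 0) := by
        intro z
        rw [hwval]
        by_cases h1 : z = u i <;> by_cases h2 : z = v i <;>
          simp [h1, h2, hne i, Ne.symm (hne i)] <;> ring
      show ∑ z, w i z * y z = _
      rw [Finset.sum_congr rfl (fun z _ => hterm z), Finset.sum_add_distrib,
        Finset.sum_ite_eq' univ (u i) y, ← Finset.mul_sum,
        Finset.sum_ite_eq' univ (v i) y]
      simp
    have hww : ∀ i j, w i ⬝ᵥ w j = if i = j then 2 else 0 := by
      intro i j
      rw [hwdot i (w j), hwval j (u i), hwval j (v i)]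
      by_cases h : i = j
      · subst h
        rw [if_pos rfl, if_neg (hne i), if_neg (fun hh : v i = u i => hne i hh.symm),
          if_pos rfl, if_pos rfl]
        nlinarith [hs]
      · rw [if_neg (hdisj i j h _ _ (humem i) (humem j)),
          if_neg (hdisj i j h _ _ (humem i) (hvmem j)),
          if_neg (hdisj i j h _ _ (hvmem i) (humem j)),
          if_neg (hdisj i j h _ _ (hvmem i) (hvmem j)), if_neg h]
        ring
    have hAwvec : ∀ j z, (A *ᵥ w j) z = A z (u j) + s * A z (v j) := by
      intro j z
      calc (A *ᵥ w j) z = (A z) ⬝ᵥ w j := rfl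
        _ = w j ⬝ᵥ (A z) := dotProduct_comm _ _
        _ = A z (u j) + s * A z (v j) := hwdot j (A z)
    have hAw : ∀ i j, w i ⬝ᵥ (A *ᵥ w j) = if i = j then 2 * s else 0 := by
      intro i j
      rw [hwdot i (A *ᵥ w j), hAwvec j (u i), hAwvec j (v i)]
      by_cases h : i = j
      · subst h
        rw [hA0 _ _ (G.loopless.irrefl (u i)), hA0 _ _ (G.loopless.irrefl (v i)),
          hA1 _ _ (hadj i), hA1 _ _ (hadj i).symm, if_pos rfl]
        ring
      · rw [hA0 _ _ (hcross i j h _ _ (humem i) (humem j)),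
          hA0 _ _ (hcross i j h _ _ (humem i) (hvmem j)),
          hA0 _ _ (hcross i j h _ _ (hvmem i) (humem j)),
          hA0 _ _ (hcross i j h _ _ (hvmem i) (hvmem j)), if_neg h]
        ring
    exact key_count A hA s hs w hww hAw
  rw [roots_charpoly A hA]
  rw [le_min_iff]
  constructor
  · have hm := main (-1) (by ring)
    rw [← Multiset.countP_eq_card_filter, Multiset.countP_map]
    refine le_trans hm (le_of_eq ?_)
    rw [Finset.card_def, Finset.filter_val]
    congr 1
    apply Multiset.filter_congr
    intro i _
    constructor <;> intro h <;> · simp only [hμ] at *; linarith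
  · have hm := main 1 (by ring)
    rw [← Multiset.countP_eq_card_filter, Multiset.countP_map]
    refine le_trans hm (le_of_eq ?_)
    rw [Finset.card_def, Finset.filter_val]
    congr 1
    apply Multiset.filter_congr
    intro i _
    constructor <;> intro h <;> · simp only [hμ] at *; linarith
end

section
/- Let G be a graph of order n with minimum degree δ ≥ 1, a dominating induced matching M of size m, and let μ₁ be the largest Laplacian eigenvalue of G. Then m ≥ (tr(L(G)) − n(μ₁ − 2δ))/(2(2δ + 1)), where tr(L(G)) = Σ_v d(v) = 2|E(G)|. -/
open Matrix Finset
open scoped Classical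

open scoped Pointwise in
lemma aux_rayleigh_s17 {k : ℕ} (A : Matrix (Fin k) (Fin k) ℝ) (hA : A.IsHermitian) (μ : ℝ)
    (h : ∀ ν ∈ spectrum ℝ A, ν ≤ μ) (x : Fin k → ℝ) :
    x ⬝ᵥ A *ᵥ x ≤ μ * (x ⬝ᵥ x) := by
  set B : Matrix (Fin k) (Fin k) ℝ := μ • (1 : Matrix (Fin k) (Fin k) ℝ) - A with hB
  have hBH : B.IsHermitian := by
    unfold Matrix.IsHermitian at hA ⊢
    rw [hB, conjTranspose_sub, conjTranspose_smul, conjTranspose_one, hA, star_trivial]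
  have hpsd : B.PosSemidef := by
    apply hBH.posSemidef_iff_eigenvalues_nonneg.mpr
    intro i
    have hmem : hBH.eigenvalues i ∈ spectrum ℝ B := hBH.eigenvalues_mem_spectrum_real i
    have : spectrum ℝ B = ({μ} : Set ℝ) - spectrum ℝ A := by
      rw [hB, show (μ • 1 : Matrix (Fin k) (Fin k) ℝ) = algebraMap ℝ _ μ by
        simp [Algebra.algebraMap_eq_smul_one], spectrum.singleton_sub_eq]
    rw [this] at hmem
    obtain ⟨a, ha, b, hb, hab⟩ := hmem
    simp only [Set.mem_singleton_iff] at ha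
    subst ha
    have := h b hb
    simp only [← hab, Pi.zero_apply]
    linarith
  have := hpsd.re_dotProduct_nonneg x
  simp only [RCLike.re_to_real, star_trivial, hB, sub_mulVec, smul_mulVec, one_mulVec,
    dotProduct_sub, dotProduct_smul, smul_eq_mul] at this
  linarith

section Aux
variable {V : Type*} [Fintype V] [DecidableEq V] {G : SimpleGraph V} {M : Finset (Sym2 V)}

omit [Fintype V] [DecidableEq V] in
lemma aux_no_SS (hM : IsDIM G M) {i j : V} (hij : G.Adj i j)
    (hi : ¬ matchedVert M i) (hj : ¬ matchedVert M j) : False := by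
  have he : s(i,j) ∈ G.edgeSet := hij
  have hnm : s(i,j) ∉ M := fun h => hi ⟨s(i,j), h, by simp⟩
  obtain ⟨f, ⟨hf, v, hv1, hv2⟩, -⟩ := hM.2 _ he hnm
  rcases Sym2.mem_iff.mp hv1 with rfl | rfl
  · exact hi ⟨f, hf, hv2⟩
  · exact hj ⟨f, hf, hv2⟩

omit [Fintype V] in
lemma aux_MM (hM : IsDIM G M) {i j : V} (hij : G.Adj i j)
    (hi : matchedVert M i) (hj : matchedVert M j) : s(i,j) ∈ M := by
  by_contra hnm
  obtain ⟨f, ⟨hf, hsh⟩, huniq⟩ := hM.2 _ hij hnm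
  obtain ⟨e₁, he₁, hie₁⟩ := hi
  obtain ⟨e₂, he₂, hje₂⟩ := hj
  have h1 : e₁ = f := huniq e₁ ⟨he₁, i, by simp, hie₁⟩
  have h2 : e₂ = f := huniq e₂ ⟨he₂, j, by simp, hje₂⟩
  subst h1
  rw [h2] at hje₂
  have : s(i,j) = e₁ := Sym2.eq_of_ne_mem hij.ne (by simp) (by simp) hie₁ hje₂
  exact hnm (this ▸ he₁)

omit [Fintype V] in
lemma aux_partner (hM : IsDIM G M) {v : V} (hv : matchedVert M v) :
    ∃ w, ∀ u, (G.Adj v u ∧ matchedVert M u) ↔ u = w := by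
  obtain ⟨e, he, hve⟩ := hv
  obtain ⟨w, rfl⟩ := Sym2.mem_iff_exists.mp hve
  have hadj : G.Adj v w := hM.1.1 _ he
  refine ⟨w, fun u => ?_⟩
  constructor
  · rintro ⟨hvu, hu⟩
    have hsm : s(v,u) ∈ M := aux_MM hM hvu ⟨_, he, by simp⟩ hu
    have : s(v,u) = s(v,w) := by
      by_contra hne
      exact hM.1.2 _ hsm _ he hne ⟨v, by simp, by simp⟩
    exact (Sym2.congr_right.mp this)
  · rintro rfl
    exact ⟨hadj, ⟨_, he, by simp⟩⟩

lemma aux_card_Vm (hM : IsDIM G M) :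
    (univ.filter fun v => matchedVert M v).card = 2 * M.card := by
  have : (univ.filter fun v => matchedVert M v) = M.biUnion (fun e => univ.filter (· ∈ e)) := by
    ext v
    simp only [mem_filter, mem_univ, true_and, mem_biUnion]
    exact Iff.rfl
  rw [this, card_biUnion]
  · rw [Finset.sum_congr rfl fun e he => ?_, Finset.sum_const, smul_eq_mul, mul_comm]
    have := G.not_isDiag_of_mem_edgeSet (hM.1.1 _ he)
    induction e with
    | h a b =>
      simp only [Sym2.isDiag_iff_proj_eq] at this
      have : (univ.filter (· ∈ s(a,b))) = {a, b} := by ext u; simp [Sym2.mem_iff]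
      rw [this, card_insert_of_notMem (by simpa using ‹¬ a = b›), card_singleton]
  · intro e he f hf hef
    rw [Function.onFun, Finset.disjoint_filter]
    intro v _ hve hvf
    exact hM.1.2 _ he _ hf hef ⟨v, hve, hvf⟩

end Aux

/-- If `G` has order `n`, minimum degree `δ ≥ 1`, a DIM of size `m`, and largest
Laplacian eigenvalue `μ₁`, then `m ≥ (tr(L(G)) − n(μ₁ − 2δ))/(2(2δ+1))`. -/
theorem stmt_17 (n m : ℕ) (G : SimpleGraph (Fin n)) [DecidableRel G.Adj]
    (hδ : 1 ≤ G.minDegree)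
    (M : Finset (Sym2 (Fin n))) (hM : IsDIM G M) (hcard : M.card = m)
    (μ₁ : ℝ) (hμ₁ : μ₁ ∈ spectrum ℝ (G.lapMatrix ℝ))
    (hμ₂ : ∀ μ ∈ spectrum ℝ (G.lapMatrix ℝ), μ ≤ μ₁) :
    ((G.lapMatrix ℝ).trace - (n : ℝ) * (μ₁ - 2 * (G.minDegree : ℝ)))
        / (2 * (2 * (G.minDegree : ℝ) + 1)) ≤ (m : ℝ) := by
  set δ : ℕ := G.minDegree with hδdef
  set x : Fin n → ℝ := fun v => if matchedVert M v then 1 else -1 with hx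
  set P : ℝ := ∑ i, ∑ j, if G.Adj i j ∧ matchedVert M i ∧ ¬ matchedVert M j then (1:ℝ) else 0
    with hP
  -- swapped version of P
  have hswap : (∑ i, ∑ j, if G.Adj i j ∧ ¬ matchedVert M i ∧ matchedVert M j then (1:ℝ) else 0)
      = P := by
    rw [hP, Finset.sum_comm]
    refine Finset.sum_congr rfl fun i _ => Finset.sum_congr rfl fun j _ => ?_
    exact if_congr (by rw [G.adj_comm]; tauto) rfl rfl
  -- trace is sum of degrees
  have htr : (G.lapMatrix ℝ).trace = ∑ v, (G.degree v : ℝ) := by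
    simp [Matrix.trace, Matrix.diag, SimpleGraph.lapMatrix, SimpleGraph.degMatrix]
  -- matched vertices count
  have hVm : (univ.filter fun v => matchedVert M v).card = 2 * m := by
    rw [aux_card_Vm hM, hcard]
  have h2mn : 2 * m ≤ n := by
    rw [← hVm]
    calc (univ.filter fun v => matchedVert M v).card ≤ (univ : Finset (Fin n)).card :=
          Finset.card_filter_le _ _
      _ = n := by simp
  -- inner sum over matched-matched for a matched vertex is 1
  have hinner : ∀ i, matchedVert M i →
      (∑ j, if G.Adj i j ∧ matchedVert M i ∧ matchedVert M j then (1:ℝ) else 0) = 1 := by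
    intro i hi
    obtain ⟨w, hw⟩ := aux_partner hM hi
    have heq : (∑ j, if G.Adj i j ∧ matchedVert M i ∧ matchedVert M j then (1:ℝ) else 0)
        = ∑ j ∈ (univ.filter fun u => G.Adj i u ∧ matchedVert M u), (1:ℝ) := by
      rw [Finset.sum_filter]
      exact Finset.sum_congr rfl fun j _ => if_congr (by tauto) rfl rfl
    have hfw : (univ.filter fun u => G.Adj i u ∧ matchedVert M u) = {w} := by
      ext u
      simp only [mem_filter, mem_univ, true_and, mem_singleton]
      exact hw u
    rw [heq, hfw]
    simp
  -- total matched-matched count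
  have hMMsum : (∑ i, ∑ j, if G.Adj i j ∧ matchedVert M i ∧ matchedVert M j then (1:ℝ) else 0)
      = 2 * m := by
    have : ∀ i : Fin n,
        (∑ j, if G.Adj i j ∧ matchedVert M i ∧ matchedVert M j then (1:ℝ) else 0)
        = if matchedVert M i then 1 else 0 := by
      intro i
      by_cases hi : matchedVert M i
      · rw [hinner i hi, if_pos hi]
      · rw [if_neg hi]
        exact Finset.sum_eq_zero fun j _ => by
          rw [if_neg (by tauto)]
    rw [Finset.sum_congr rfl fun i _ => this i]
    have heq : (∑ i : Fin n, if matchedVert M i then (1:ℝ) else 0)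
        = ∑ i ∈ (univ.filter fun v => matchedVert M v), (1:ℝ) := by
      rw [Finset.sum_filter]
    rw [heq, Finset.sum_const, hVm]
    push_cast
    ring
  -- sum of degrees equals 2m + 2P
  have ht : (∑ v, (G.degree v : ℝ)) = 2 * m + 2 * P := by
    have hdeg : ∀ v : Fin n, (G.degree v : ℝ) = ∑ j, if G.Adj v j then (1:ℝ) else 0 :=
      fun v => G.degree_eq_sum_if_adj v
    calc (∑ v, (G.degree v : ℝ)) = ∑ i, ∑ j, if G.Adj i j then (1:ℝ) else 0 :=
          Finset.sum_congr rfl fun v _ => hdeg v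
      _ = ∑ i, ∑ j, ((if G.Adj i j ∧ matchedVert M i ∧ matchedVert M j then (1:ℝ) else 0)
            + (if G.Adj i j ∧ matchedVert M i ∧ ¬ matchedVert M j then (1:ℝ) else 0)
            + (if G.Adj i j ∧ ¬ matchedVert M i ∧ matchedVert M j then (1:ℝ) else 0)) := by
          refine Finset.sum_congr rfl fun i _ => Finset.sum_congr rfl fun j _ => ?_
          by_cases h1 : G.Adj i j
          · by_cases h2 : matchedVert M i
            · by_cases h3 : matchedVert M j <;> simp [h1, h2, h3]
            · by_cases h3 : matchedVert M j
              · simp [h1, h2, h3]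
              · exact absurd (aux_no_SS hM h1 h2 h3) not_false
          · simp [h1]
      _ = 2 * m + 2 * P := by
          simp only [Finset.sum_add_distrib]
          rw [hMMsum, ← hP, hswap]
          ring
  -- lower bound on P
  have hPlow : (n : ℝ) * δ - 2 * (m : ℝ) * δ ≤ P := by
    have hPeq : P = ∑ i ∈ univ.filter (fun i => ¬ matchedVert M i), (G.degree i : ℝ) := by
      rw [← hswap]
      rw [← Finset.sum_filter_add_sum_filter_not univ (fun i => ¬ matchedVert M i)]
      have hz : ∑ i ∈ univ.filter (fun i => ¬¬ matchedVert M i),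
          (∑ j, if G.Adj i j ∧ ¬ matchedVert M i ∧ matchedVert M j then (1:ℝ) else 0) = 0 := by
        refine Finset.sum_eq_zero fun i hi => Finset.sum_eq_zero fun j _ => ?_
        rw [if_neg]
        simp only [mem_filter, not_not] at hi
        tauto
      rw [hz, add_zero]
      refine Finset.sum_congr rfl fun i hi => ?_
      simp only [mem_filter, mem_univ, true_and] at hi
      rw [G.degree_eq_sum_if_adj i]
      refine Finset.sum_congr rfl fun j _ => ?_
      refine if_congr ⟨fun h => h.1, fun h => ⟨h, hi, ?_⟩⟩ rfl rfl
      by_contra hj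
      exact aux_no_SS hM h hi hj
    have hcardS : (univ.filter (fun i : Fin n => ¬ matchedVert M i)).card = n - 2 * m := by
      rw [Finset.filter_not, Finset.card_sdiff_of_subset (Finset.filter_subset _ _)]
      simp [hVm]
    have hbound : ∀ i ∈ univ.filter (fun i : Fin n => ¬ matchedVert M i),
        (δ : ℝ) ≤ (G.degree i : ℝ) := fun i _ => by
      exact_mod_cast G.minDegree_le_degree i
    have := Finset.card_nsmul_le_sum _ _ _ hbound
    rw [hPeq]
    rw [hcardS] at this
    have hcast : ((n - 2 * m : ℕ) : ℝ) = (n : ℝ) - 2 * m := by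
      push_cast [Nat.cast_sub h2mn]
      ring
    calc (n : ℝ) * δ - 2 * (m : ℝ) * δ = ((n - 2 * m : ℕ) : ℝ) * δ := by rw [hcast]; ring
      _ = (n - 2 * m : ℕ) • (δ : ℝ) := by rw [nsmul_eq_mul]
      _ ≤ _ := this
  -- quadratic form equals 4P
  have hQ : x ⬝ᵥ (G.lapMatrix ℝ) *ᵥ x = 4 * P := by
    rw [← Matrix.toLinearMap₂'_apply', SimpleGraph.lapMatrix_toLinearMap₂']
    have : (∑ i, ∑ j, if G.Adj i j then (x i - x j)^2 else 0)
        = ∑ i, ∑ j, (4 * (if G.Adj i j ∧ matchedVert M i ∧ ¬ matchedVert M j then (1:ℝ) else 0)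
            + 4 * (if G.Adj i j ∧ ¬ matchedVert M i ∧ matchedVert M j then (1:ℝ) else 0)) := by
      refine Finset.sum_congr rfl fun i _ => Finset.sum_congr rfl fun j _ => ?_
      by_cases h1 : G.Adj i j <;> by_cases h2 : matchedVert M i <;>
        by_cases h3 : matchedVert M j <;> simp [hx, h1, h2, h3] <;> norm_num
    rw [this]
    simp only [Finset.sum_add_distrib, ← Finset.mul_sum]
    rw [← hP, hswap]
    ring
  -- norm of x
  have hxx : x ⬝ᵥ x = (n : ℝ) := by
    rw [dotProduct]
    rw [Finset.sum_congr rfl fun v _ => show x v * x v = 1 by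
      by_cases hv : matchedVert M v <;> simp [hx, hv]]
    simp
  -- Rayleigh bound
  have hray : 4 * P ≤ μ₁ * n := by
    rw [← hQ, ← hxx]
    exact aux_rayleigh_s17 _ (G.posSemidef_lapMatrix ℝ).1 μ₁ hμ₂ x
  -- put it together
  have hδ1 : (1 : ℝ) ≤ (δ : ℝ) := by exact_mod_cast hδ
  rw [div_le_iff₀ (by linarith)]
  rw [htr, ht]
  nlinarith [hray, hPlow]
end

section
/- Let G be a graph of order n with minimum degree δ ≥ 1, a dominating induced matching M of size m, and let q₁ be the largest signless Laplacian eigenvalue of G. Then m ≥ (tr(Q(G)) − n(q₁ − 2δ))/(2(2δ − 1)) (for δ ≥ 1), where tr(Q(G)) = Σ_v d(v). -/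
open Matrix Finset
open scoped Classical

set_option linter.unusedSectionVars false in
/-- Rayleigh-type bound: for a real symmetric matrix whose real spectrum is bounded above
by `q₁`, every vector `x` satisfies `xᵀ Q x ≤ q₁ ‖x‖²`. -/
lemma rayleigh_bound {n : ℕ} (Q : Matrix (Fin n) (Fin n) ℝ) (hQ : Q.IsHermitian) (q₁ : ℝ)
    (hq₂ : ∀ μ ∈ spectrum ℝ Q, μ ≤ q₁) (x : Fin n → ℝ) :
    x ⬝ᵥ (Q *ᵥ x) ≤ q₁ * (x ⬝ᵥ x) := by
  set B : Matrix (Fin n) (Fin n) ℝ := algebraMap ℝ _ q₁ - Q with hB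
  have hBh : B.IsHermitian := by
    refine Matrix.IsHermitian.sub ?_ hQ
    rw [Matrix.algebraMap_eq_diagonal]
    exact Matrix.isHermitian_diagonal _
  have hpsd : B.PosSemidef := by
    refine hBh.posSemidef_iff_eigenvalues_nonneg.mpr fun i => ?_
    have hmem := hBh.eigenvalues_mem_spectrum_real i
    rw [← spectrum.singleton_sub_eq] at hmem
    obtain ⟨a, ha, b, hb, hab⟩ := Set.mem_sub.mp hmem
    rw [Set.mem_singleton_iff] at ha
    subst ha
    rw [← hab]
    linarith [hq₂ b hb, (Pi.zero_apply i : (0 : Fin n → ℝ) i = 0)]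
  have h := hpsd.dotProduct_mulVec_nonneg x
  have hsx : star x = x := by simp
  rw [hsx, hB, Matrix.sub_mulVec, dotProduct_sub, Matrix.algebraMap_eq_diagonal] at h
  have e : x ⬝ᵥ (diagonal ((algebraMap ℝ (Fin n → ℝ)) q₁) *ᵥ x) = q₁ * (x ⬝ᵥ x) := by
    simp only [dotProduct, Matrix.mulVec_diagonal, Pi.algebraMap_apply, Algebra.algebraMap_self_apply,
      Finset.mul_sum]
    exact Finset.sum_congr rfl (fun i _ => by ring)
  rw [e] at h
  linarith

section Comb
variable {n : ℕ} (G : SimpleGraph (Fin n)) [DecidableRel G.Adj] (M : Finset (Sym2 (Fin n)))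

set_option linter.unusedSectionVars false in
/-- Every edge of `G` has a matched endpoint. -/
lemma exists_matched_end (hM : IsDIM G M) {e : Sym2 (Fin n)} (he : e ∈ G.edgeSet) :
    ∃ v ∈ e, matchedVert M v := by
  by_cases heM : e ∈ M
  · induction e with
    | _ a b => exact ⟨a, Sym2.mem_mk_left a b, ⟨_, heM, Sym2.mem_mk_left a b⟩⟩
  · obtain ⟨f, ⟨hf, u, hue, huf⟩, -⟩ := hM.2 e he heM
    exact ⟨u, hue, ⟨f, hf, huf⟩⟩

set_option linter.unusedSectionVars false in
/-- There are at most `2 |M|` matched vertices. -/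
lemma matched_card_le :
    (univ.filter fun v => matchedVert M v).card ≤ 2 * M.card := by
  have hsub : (univ.filter fun v => matchedVert M v) ⊆
      M.biUnion (fun e => univ.filter (· ∈ e)) := by
    intro v hv
    simp only [mem_filter, mem_univ, true_and] at hv
    obtain ⟨e, he, hve⟩ := hv
    exact Finset.mem_biUnion.mpr ⟨e, he, by simp [hve]⟩
  refine (Finset.card_le_card hsub).trans ((Finset.card_biUnion_le).trans ?_)
  calc ∑ e ∈ M, (univ.filter (· ∈ e)).card ≤ ∑ _e ∈ M, 2 := by
        refine Finset.sum_le_sum fun e _ => ?_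
        induction e with
        | _ a b =>
          refine le_trans (Finset.card_le_card (fun v hv => ?_))
            (le_trans (Finset.card_insert_le a {b}) (by simp))
          simp only [mem_filter, Sym2.mem_iff] at hv
          simp [hv.2]
    _ = 2 * M.card := by rw [Finset.sum_const, smul_eq_mul, mul_comm]

/-- The degrees of the unmatched vertices, plus `|M|`, sum to at most `|E(G)|`. -/
lemma unmatched_sum_deg_le (hM : IsDIM G M) :
    (∑ v ∈ univ.filter (fun v => ¬ matchedVert M v), G.degree v) + M.card
      ≤ G.edgeFinset.card := by
  classical
  set S := univ.filter (fun v => ¬ matchedVert M v) with hS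
  have hdisj : ∀ v ∈ S, ∀ w ∈ S, v ≠ w →
      Disjoint (G.incidenceFinset v) (G.incidenceFinset w) := by
    intro v hv w hw hvw
    simp only [hS, mem_filter] at hv hw
    refine Finset.disjoint_left.mpr fun e hev hew => ?_
    rw [SimpleGraph.mem_incidenceFinset] at hev hew
    obtain ⟨heE, hve⟩ := hev
    obtain ⟨-, hwe⟩ := hew
    obtain ⟨u, hue, hu⟩ := exists_matched_end G M hM heE
    rw [(Sym2.mem_and_mem_iff hvw).mp ⟨hve, hwe⟩, Sym2.mem_iff] at hue
    rcases hue with rfl | rfl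
    · exact hv.2 hu
    · exact hw.2 hu
  have hcard : ∑ v ∈ S, G.degree v = (S.biUnion (fun v => G.incidenceFinset v)).card := by
    rw [Finset.card_biUnion hdisj]
    exact Finset.sum_congr rfl fun v _ => (G.card_incidenceFinset_eq_degree v).symm
  have hsub : S.biUnion (fun v => G.incidenceFinset v) ⊆ G.edgeFinset \ M := by
    intro e he
    obtain ⟨v, hv, hev⟩ := Finset.mem_biUnion.mp he
    rw [SimpleGraph.mem_incidenceFinset] at hev
    simp only [hS, mem_filter] at hv
    refine Finset.mem_sdiff.mpr ⟨SimpleGraph.mem_edgeFinset.mpr hev.1, fun heM => ?_⟩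
    exact hv.2 ⟨e, heM, hev.2⟩
  have hMsub : M ⊆ G.edgeFinset := fun e he => SimpleGraph.mem_edgeFinset.mpr (hM.1.1 e he)
  have h1 := (Finset.card_le_card hsub).trans_eq (Finset.card_sdiff_of_subset hMsub)
  have h2 := Finset.card_le_card hMsub
  rw [hcard]
  omega

end Comb

/-- If `G` has order `n`, minimum degree `δ ≥ 1`, a DIM of size `m`, and largest signless
Laplacian eigenvalue `q₁`, then `m ≥ (tr(Q(G)) − n(q₁ − 2δ))/(2(2δ−1))`. -/
theorem stmt_18 (n m : ℕ) (G : SimpleGraph (Fin n)) [DecidableRel G.Adj]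
    (hδ : 1 ≤ G.minDegree)
    (M : Finset (Sym2 (Fin n))) (hM : IsDIM G M) (hcard : M.card = m)
    (q₁ : ℝ) (hq₁ : q₁ ∈ spectrum ℝ (G.degMatrix ℝ + G.adjMatrix ℝ))
    (hq₂ : ∀ μ ∈ spectrum ℝ (G.degMatrix ℝ + G.adjMatrix ℝ), μ ≤ q₁) :
    ((G.degMatrix ℝ + G.adjMatrix ℝ).trace - (n : ℝ) * (q₁ - 2 * (G.minDegree : ℝ)))
        / (2 * (2 * (G.minDegree : ℝ) - 1)) ≤ (m : ℝ) := by
  classical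
  set Q : Matrix (Fin n) (Fin n) ℝ := G.degMatrix ℝ + G.adjMatrix ℝ with hQdef
  -- Q is symmetric
  have hQh : Q.IsHermitian := by
    rw [Matrix.IsHermitian, Matrix.conjTranspose_eq_transpose_of_trivial, hQdef]
    exact Matrix.IsSymm.add (G.isSymm_degMatrix ℝ) (G.isSymm_adjMatrix)
  -- Rayleigh with the all-ones vector
  have hray := rayleigh_bound Q hQh q₁ hq₂ (fun _ => (1 : ℝ))
  have hQv : Q *ᵥ (fun _ => (1 : ℝ)) = fun v => 2 * (G.degree v : ℝ) := by
    funext v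
    rw [hQdef, Matrix.add_mulVec, Pi.add_apply, SimpleGraph.degMatrix_mulVec_apply,
      SimpleGraph.adjMatrix_mulVec_apply]
    rw [Finset.sum_const, nsmul_eq_mul, SimpleGraph.card_neighborFinset_eq_degree]
    ring
  have hlhs : (fun _ => (1 : ℝ)) ⬝ᵥ (Q *ᵥ (fun _ => (1 : ℝ)))
      = 2 * ∑ v, (G.degree v : ℝ) := by
    rw [hQv]
    simp [dotProduct, Finset.mul_sum]
  have hrhs : ((fun _ => (1 : ℝ)) : Fin n → ℝ) ⬝ᵥ ((fun _ => (1 : ℝ)) : Fin n → ℝ) = (n : ℝ) := by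
    simp [dotProduct]
  rw [hlhs, hrhs] at hray
  -- trace
  have htr : Q.trace = ∑ v, (G.degree v : ℝ) := by
    rw [hQdef, Matrix.trace_add, SimpleGraph.trace_adjMatrix, add_zero,
      SimpleGraph.degMatrix, Matrix.trace_diagonal]
  -- combinatorial facts
  set S := univ.filter (fun v => ¬ matchedVert M v) with hS
  have hsum : ∑ v, G.degree v = 2 * G.edgeFinset.card :=
    G.sum_degrees_eq_twice_card_edges
  have hSE : (∑ v ∈ S, G.degree v) + m ≤ G.edgeFinset.card := by
    rw [← hcard]; exact unmatched_sum_deg_le G M hM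
  have hT : (univ.filter fun v => matchedVert M v).card ≤ 2 * m := by
    rw [← hcard]; exact matched_card_le M
  have hST : (univ.filter fun v => matchedVert M v).card + S.card = n := by
    rw [hS, Finset.card_filter_add_card_filter_not, Finset.card_univ, Fintype.card_fin]
  have hSd : S.card * G.minDegree ≤ ∑ v ∈ S, G.degree v := by
    calc S.card * G.minDegree = ∑ _v ∈ S, G.minDegree := by
          rw [Finset.sum_const, smul_eq_mul]
      _ ≤ ∑ v ∈ S, G.degree v := Finset.sum_le_sum fun v _ => G.minDegree_le_degree v
  -- pass to the reals
  have hδ1 : (1 : ℝ) ≤ (G.minDegree : ℝ) := by exact_mod_cast hδ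
  have hDsum : ∑ v, (G.degree v : ℝ) = ((∑ v, G.degree v : ℕ) : ℝ) := by push_cast; rfl
  have hkey : (2 * m : ℝ) + 2 * ((n : ℝ) - 2 * m) * (G.minDegree : ℝ) ≤ ∑ v, (G.degree v : ℝ) := by
    have hsS : ((n : ℝ) - 2 * m) ≤ (S.card : ℝ) := by
      have h1 : ((univ.filter fun v => matchedVert M v).card : ℝ) ≤ 2 * m := by
        exact_mod_cast hT
      have h2 : ((univ.filter fun v => matchedVert M v).card : ℝ) + (S.card : ℝ) = n := by
        exact_mod_cast hST
      linarith
    have hprod : ((n : ℝ) - 2 * m) * (G.minDegree : ℝ) ≤ (S.card : ℝ) * (G.minDegree : ℝ) :=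
      mul_le_mul_of_nonneg_right hsS (by linarith)
    have hSdR : (S.card : ℝ) * (G.minDegree : ℝ) ≤ ((∑ v ∈ S, G.degree v : ℕ) : ℝ) := by
      exact_mod_cast hSd
    have hSER : ((∑ v ∈ S, G.degree v : ℕ) : ℝ) + (m : ℝ) ≤ (G.edgeFinset.card : ℝ) := by
      exact_mod_cast hSE
    have hsumR : ∑ v, (G.degree v : ℝ) = 2 * (G.edgeFinset.card : ℝ) := by
      rw [hDsum]; exact_mod_cast hsum
    linarith
  -- finish
  have hpos : (0 : ℝ) < 2 * (2 * (G.minDegree : ℝ) - 1) := by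
    linarith
  rw [div_le_iff₀ hpos, htr]
  nlinarith [hray, hkey]
end
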